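/- Let A be an n×K complex matrix and let X be a K×n complex matrix satisfying A·X·A = A and (A·X)^H = A·X. Then for every vector r in the column space of A and every ψ ∈ ℂ^n, |⟨ψ, r⟩| ≤ ‖X ψ‖_1 · ‖A^H r‖_∞. -/

import Mathlib

open Matrix

/-- Hölder-type inequality underlying the exact recovery analysis of (Q)OMP:
if `X` satisfies the Moore–Penrose conditions `A·X·A = A` and `(A·X)ᴴ = A·X`
(so that `A·X` is the orthogonal projector onto the column space of `A`), then
for every `r` in the column space of `A` and every `ψ ∈ ℂ^n`,
`|⟨ψ, r⟩| ≤ ‖X ψ‖₁ · ‖Aᴴ r‖_∞`. -/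
theorem holder_pseudoinverse_bound {n K : ℕ}
    (A : Matrix (Fin n) (Fin K) ℂ) (X : Matrix (Fin K) (Fin n) ℂ)
    (hAXA : A * X * A = A) (hherm : (A * X)ᴴ = A * X)
    (r : EuclideanSpace ℂ (Fin n))
    (hrcol : ∃ v : Fin K → ℂ, (show EuclideanSpace ℂ (Fin n) from WithLp.toLp 2 (A.mulVec v)) = r)
    (ψ : EuclideanSpace ℂ (Fin n)) :
    ‖(inner ℂ ψ r : ℂ)‖ ≤ (∑ i, ‖X.mulVec ψ i‖) * (⨆ i, ‖Aᴴ.mulVec r i‖) := by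
  obtain ⟨v, hv⟩ := hrcol
  -- r is fixed by the projector A*X
  have hproj : (A * X).mulVec r = r := by
    have : (A * X).mulVec (A.mulVec v) = A.mulVec v := by
      rw [Matrix.mulVec_mulVec, hAXA]
    rw [← hv]; exact this
  set w : Fin K → ℂ := X.mulVec ψ with hw
  set u : Fin K → ℂ := Aᴴ.mulVec r with hu
  have key : (inner ℂ ψ r : ℂ) = ∑ k, (starRingEnd ℂ) (w k) * u k := by
    have h1 : (inner ℂ ψ r : ℂ) = star ψ ⬝ᵥ r := by
      simp [inner, dotProduct, EuclideanSpace.inner_eq_star_dotProduct, mul_comm]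
    have h2 : star ψ ⬝ᵥ r = star ψ ⬝ᵥ (A * X).mulVec r := by rw [hproj]
    have h3 : star ψ ⬝ᵥ (A * X).mulVec r = star ((A * X)ᴴ.mulVec ψ) ⬝ᵥ r := by
      rw [Matrix.dotProduct_mulVec, Matrix.star_mulVec, Matrix.conjTranspose_conjTranspose]
    have h4 : star ((A * X)ᴴ.mulVec ψ) ⬝ᵥ r = star (A.mulVec w) ⬝ᵥ r := by
      rw [hherm, hw, Matrix.mulVec_mulVec]
    have h5 : star (A.mulVec w) ⬝ᵥ r = star w ⬝ᵥ u := by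
      rw [Matrix.star_mulVec, Matrix.dotProduct_mulVec]
    rw [h1, h2, h3, h4, h5]
    simp [dotProduct, Pi.star_apply]
  rw [key]
  calc ‖∑ k, (starRingEnd ℂ) (w k) * u k‖ ≤ ∑ k, ‖(starRingEnd ℂ) (w k) * u k‖ :=
        norm_sum_le _ _
    _ ≤ ∑ k, ‖w k‖ * (⨆ i, ‖u i‖) := by
        refine Finset.sum_le_sum fun k _ => ?_
        rw [norm_mul, RCLike.norm_conj]
        exact mul_le_mul_of_nonneg_left (le_ciSup (f := fun i => ‖u i‖) (Set.Finite.bddAbove (Set.finite_range _)) k)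
          (norm_nonneg _)
    _ = (∑ i, ‖w i‖) * (⨆ i, ‖u i‖) := by rw [← Finset.sum_mul]
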